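/- Let k be a field and let V, W be finite-dimensional k-vector spaces with linear endomorphisms f : V →ₗ[k] V and g : W →ₗ[k] W. Suppose f and g are shift equivalent: there exist linear maps u : V →ₗ[k] W and v : W →ₗ[k] V and a natural number n such that u ∘ f = g ∘ u, v ∘ g = f ∘ v, v ∘ u = f^n, and u ∘ v = g^n. Then the characteristic polynomials of f and g agree up to a power of X: there exist natural numbers i and j such that X^i * charpoly(f) = X^j * charpoly(g) in k[X]. -/

import Mathlib

open Polynomial LinearMap Module

/-- Charpoly factors along an invariant complementary pair of submodules. -/
lemma charpoly_eq_mul_of_isCompl {k V : Type*} [Field k] [AddCommGroup V] [Module k V]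
    [FiniteDimensional k V] (p q : Submodule k V) (h : IsCompl p q) (f : V →ₗ[k] V)
    (hp : ∀ x ∈ p, f x ∈ p) (hq : ∀ x ∈ q, f x ∈ q) :
    f.charpoly = (f.restrict hp).charpoly * (f.restrict hq).charpoly := by
  have hf : f = (Submodule.prodEquivOfIsCompl p q h).conj
      ((f.restrict hp).prodMap (f.restrict hq)) := by
    ext x
    rw [LinearEquiv.conj_apply_apply]
    set e := Submodule.prodEquivOfIsCompl p q h with he
    calc f x = f ((e.symm x).1 : V) + f ((e.symm x).2 : V) := by
          conv_lhs => rw [← e.apply_symm_apply x]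
          rw [Submodule.coe_prodEquivOfIsCompl', map_add]
      _ = e (((f.restrict hp).prodMap (f.restrict hq)) (e.symm x)) := by
          rw [Submodule.coe_prodEquivOfIsCompl']
          rfl
  conv_lhs => rw [hf]
  rw [LinearEquiv.charpoly_conj, LinearMap.charpoly_prodMap]

/-- Shift equivalent endomorphisms of finite-dimensional vector spaces have equal
characteristic polynomials up to a power of `X`. -/
theorem charpoly_eq_of_shift_equivalent (k : Type*) [Field k]
    (V W : Type*) [AddCommGroup V] [Module k V] [FiniteDimensional k V]
    [AddCommGroup W] [Module k W] [FiniteDimensional k W]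
    (f : V →ₗ[k] V) (g : W →ₗ[k] W) (u : V →ₗ[k] W) (v : W →ₗ[k] V) (n : ℕ)
    (hu : u ∘ₗ f = g ∘ₗ u) (hv : v ∘ₗ g = f ∘ₗ v)
    (hvu : v ∘ₗ u = f ^ n) (huv : u ∘ₗ v = g ^ n) :
    ∃ i j : ℕ, Polynomial.X ^ i * f.charpoly = Polynomial.X ^ j * g.charpoly := by
  classical
  have hum : ∀ m : ℕ, u ∘ₗ (f ^ m) = (g ^ m) ∘ₗ u := by
    intro m
    induction m with
    | zero => simp [Module.End.one_eq_id]
    | succ m ih =>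
      rw [pow_succ, pow_succ, Module.End.mul_eq_comp, Module.End.mul_eq_comp, ← LinearMap.comp_assoc, ih,
        LinearMap.comp_assoc, hu, ← LinearMap.comp_assoc]
  have hvm : ∀ m : ℕ, v ∘ₗ (g ^ m) = (f ^ m) ∘ₗ v := by
    intro m
    induction m with
    | zero => simp [Module.End.one_eq_id]
    | succ m ih =>
      rw [pow_succ, pow_succ, Module.End.mul_eq_comp, Module.End.mul_eq_comp, ← LinearMap.comp_assoc, ih,
        LinearMap.comp_assoc, hv, ← LinearMap.comp_assoc]
  obtain ⟨N, ⟨hfN, hgN⟩, hN1⟩ := ((f.eventually_isCompl_ker_pow_range_pow.and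
      g.eventually_isCompl_ker_pow_range_pow).and (Filter.eventually_ge_atTop 1)).exists
  obtain ⟨m, rfl⟩ : ∃ m, N = m + 1 := ⟨N - 1, (Nat.succ_pred_eq_of_pos hN1).symm⟩
  set N := m + 1
  -- invariance of kernels and ranges
  have hfk : ∀ x ∈ ker (f ^ N), f x ∈ ker (f ^ N) := by
    intro x hx
    rw [mem_ker] at hx ⊢
    rw [← Module.End.mul_apply, ← pow_succ, pow_succ', Module.End.mul_apply, hx, map_zero]
  have hgk : ∀ x ∈ ker (g ^ N), g x ∈ ker (g ^ N) := by
    intro x hx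
    rw [mem_ker] at hx ⊢
    rw [← Module.End.mul_apply, ← pow_succ, pow_succ', Module.End.mul_apply, hx, map_zero]
  have hfr : ∀ x ∈ range (f ^ N), f x ∈ range (f ^ N) := by
    rintro _ ⟨y, rfl⟩
    exact ⟨f y, by rw [← Module.End.mul_apply, ← pow_succ, pow_succ', Module.End.mul_apply]⟩
  have hgr : ∀ x ∈ range (g ^ N), g x ∈ range (g ^ N) := by
    rintro _ ⟨y, rfl⟩
    exact ⟨g y, by rw [← Module.End.mul_apply, ← pow_succ, pow_succ', Module.End.mul_apply]⟩
  have hur : ∀ x ∈ range (f ^ N), u x ∈ range (g ^ N) := by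
    rintro _ ⟨y, rfl⟩
    exact ⟨u y, by rw [← comp_apply, ← hum, comp_apply]⟩
  have hvr : ∀ x ∈ range (g ^ N), v x ∈ range (f ^ N) := by
    rintro _ ⟨y, rfl⟩
    exact ⟨v y, by rw [← comp_apply, ← hvm, comp_apply]⟩
  set fk := f.restrict hfk with hfk'
  set gk := g.restrict hgk with hgk'
  set f' := f.restrict hfr with hf'
  set g' := g.restrict hgr with hg'
  set u' := u.restrict hur with hu'
  set v' := v.restrict hvr with hv'
  -- nilpotency of the kernel parts
  have hfknil : IsNilpotent fk := by
    refine ⟨N, ?_⟩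
    rw [hfk', Module.End.pow_restrict]
    ext x
    simp [LinearMap.restrict_apply]
  have hgknil : IsNilpotent gk := by
    refine ⟨N, ?_⟩
    rw [hgk', Module.End.pow_restrict]
    ext x
    simp [LinearMap.restrict_apply]
  -- f' and g' are bijective
  have hf'inj : Function.Injective f' := by
    rw [← LinearMap.ker_eq_bot, Submodule.eq_bot_iff]
    rintro ⟨x, hx⟩ hmem
    have h0 : f x = 0 := by
      simpa [hf', Subtype.ext_iff, LinearMap.restrict_apply] using hmem
    have hxker : x ∈ ker (f ^ N) := by
      rw [mem_ker, pow_succ, Module.End.mul_apply, h0, map_zero]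
    exact Subtype.ext (Submodule.disjoint_def.mp hfN.disjoint x hxker hx)
  have hg'inj : Function.Injective g' := by
    rw [← LinearMap.ker_eq_bot, Submodule.eq_bot_iff]
    rintro ⟨x, hx⟩ hmem
    have h0 : g x = 0 := by
      simpa [hg', Subtype.ext_iff, LinearMap.restrict_apply] using hmem
    have hxker : x ∈ ker (g ^ N) := by
      rw [mem_ker, pow_succ, Module.End.mul_apply, h0, map_zero]
    exact Subtype.ext (Submodule.disjoint_def.mp hgN.disjoint x hxker hx)
  have hfn_inj : Function.Injective ⇑(f' ^ n) := by
    rw [Module.End.coe_pow]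
    exact hf'inj.iterate n
  have hgn_surj : Function.Surjective ⇑(g' ^ n) := by
    rw [Module.End.coe_pow]
    exact ((LinearMap.injective_iff_surjective).mp hg'inj).iterate n
  -- restricted compositions
  have hvu' : v' ∘ₗ u' = f' ^ n := by
    rw [hf', Module.End.pow_restrict]
    refine LinearMap.ext fun x => Subtype.ext ?_
    have : v (u (x : V)) = (f ^ n) (x : V) := by rw [← comp_apply, hvu]
    simpa [hu', hv', LinearMap.restrict_apply] using this
  have huv' : u' ∘ₗ v' = g' ^ n := by
    rw [hg', Module.End.pow_restrict]
    refine LinearMap.ext fun x => Subtype.ext ?_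
    have : u (v (x : W)) = (g ^ n) (x : W) := by rw [← comp_apply, huv]
    simpa [hu', hv', LinearMap.restrict_apply] using this
  have hintw : u' ∘ₗ f' = g' ∘ₗ u' := by
    refine LinearMap.ext fun x => Subtype.ext ?_
    have : u (f (x : V)) = g (u (x : V)) := by rw [← comp_apply, hu, comp_apply]
    simpa [hu', hf', hg', LinearMap.restrict_apply] using this
  -- u' is bijective
  have hu'inj : Function.Injective u' := by
    intro x y hxy
    apply hfn_inj
    rw [← hvu']
    simp only [coe_comp, Function.comp_apply, hxy]
  have hu'surj : Function.Surjective u' := by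
    intro y
    obtain ⟨z, hz⟩ := hgn_surj y
    exact ⟨v' z, by rw [← comp_apply, huv']; exact hz⟩
  set eU := LinearEquiv.ofBijective u' ⟨hu'inj, hu'surj⟩ with heU
  have hcpeq : f'.charpoly = g'.charpoly := by
    rw [← LinearEquiv.charpoly_conj eU f']
    congr 1
    refine LinearMap.ext fun y => ?_
    rw [LinearEquiv.conj_apply_apply]
    conv_rhs => rw [← eU.apply_symm_apply y]
    generalize eU.symm y = x
    show u' (f' x) = g' (u' x)
    rw [← comp_apply, ← comp_apply, hintw]
  have hfchar : f.charpoly = X ^ (finrank k (ker (f ^ N))) * f'.charpoly := by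
    rw [charpoly_eq_mul_of_isCompl _ _ hfN f hfk hfr, ← hfk', ← hf',
      hfknil.charpoly_eq_X_pow_finrank]
  have hgchar : g.charpoly = X ^ (finrank k (ker (g ^ N))) * g'.charpoly := by
    rw [charpoly_eq_mul_of_isCompl _ _ hgN g hgk hgr, ← hgk', ← hg',
      hgknil.charpoly_eq_X_pow_finrank]
  refine ⟨finrank k ↥(ker (g ^ N)), finrank k ↥(ker (f ^ N)), ?_⟩
  rw [hfchar, hgchar, hcpeq]
  ring
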